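/- Let A = Σ_{k₁,k₂,k₃} π_{L₁}^{k₁} ⊗ π_{L₂}^{k₂} ⊗ π_{L₃}^{k₃} ⊗ A_{k₁k₂k₃} be a three-level block circulant matrix whose blocks are rank-1 Hadamard separable, i.e. A_{k₁k₂k₃} = A^{(1)}_{k₁} ∘ A^{(2)}_{k₂} ∘ A^{(3)}_{k₃} with A^{(ℓ)}_{k} ∈ ℂ^{m₀×m₀} for 0 ≤ k ≤ L_ℓ − 1. Then A = (F_𝐋^* ⊗ I_{m₀}) · D_A · (F_𝐋 ⊗ I_{m₀}) with F_𝐋 = F_{L₁} ⊗ F_{L₂} ⊗ F_{L₃}, where D_A is block diagonal and its diagonal block indexed by (j₁, j₂, j₃) factorizes as the Hadamard product Ā^{(1)}_{j₁} ∘ Ā^{(2)}_{j₂} ∘ Ā^{(3)}_{j₃}, where Ā^{(ℓ)}_{j} = Σ_{k=0}^{L_ℓ−1} ω_{L_ℓ}^{jk} A^{(ℓ)}_{k} are the one-dimensional Fourier transforms of the factor sequences. -/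

import Mathlib

open Matrix Complex
open scoped Matrix Kronecker

noncomputable section

/-- `ω_L = exp(-2πi/L)`. -/
def omg (L : ℕ) : ℂ := Complex.exp (-(2 * Real.pi * Complex.I) / L)

/-- The unitary Fourier matrix `F_L` with entries `ω_L^{(k-1)(l-1)}/√L`. -/
def Fmat (L : ℕ) : Matrix (Fin L) (Fin L) ℂ :=
  Matrix.of fun k l : Fin L => omg L ^ ((k : ℕ) * (l : ℕ)) / (Real.sqrt L : ℂ)

/-- The cyclic downward shift matrix `π_L`. -/
def shiftMat (L : ℕ) : Matrix (Fin L) (Fin L) ℂ :=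
  Matrix.of fun i j : Fin L => if (i : ℕ) = ((j : ℕ) + 1) % L then 1 else 0

lemma omg_prim (L : ℕ) (hL : 1 ≤ L) : IsPrimitiveRoot (omg L) L := by
  have h := Complex.isPrimitiveRoot_exp L (by omega)
  have : omg L = (Complex.exp (2 * Real.pi * Complex.I / L))⁻¹ := by
    rw [← Complex.exp_neg, omg]; ring_nf
  rw [this]
  exact h.inv


lemma omg_abs (L : ℕ) : ‖omg L‖ = 1 := by
  unfold omg
  rw [Complex.norm_exp]
  have : (-(2 * Real.pi * Complex.I) / L).re = 0 := by
    simp [Complex.div_re]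
  rw [this, Real.exp_zero]


lemma conj_omg (L : ℕ) : (starRingEnd ℂ) (omg L) = (omg L)⁻¹ :=
  (Complex.inv_eq_conj (omg_abs L)).symm


lemma omg_pow_mod (L : ℕ) (hL : 1 ≤ L) (n : ℕ) : omg L ^ n = omg L ^ (n % L) := by
  conv_lhs => rw [← Nat.mod_add_div n L]
  rw [pow_add, pow_mul, (omg_prim L hL).pow_eq_one, one_pow, mul_one]


lemma shift_pow (L : ℕ) (hL : 1 ≤ L) (n : ℕ) (i j : Fin L) :
    (shiftMat L ^ n) i j = if (i : ℕ) = ((j : ℕ) + n) % L then 1 else 0 := by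
  induction n generalizing j with
  | zero =>
    simp only [pow_zero, Matrix.one_apply, Nat.add_zero, Nat.mod_eq_of_lt j.isLt, Fin.ext_iff]
  | succ n ih =>
    rw [pow_succ, Matrix.mul_apply]
    have hlt : ((j : ℕ) + 1) % L < L := Nat.mod_lt _ (by omega)
    set jj : Fin L := ⟨((j : ℕ) + 1) % L, hlt⟩ with hjj
    have hsel : ∀ r : Fin L, (shiftMat L r j) = if r = jj then 1 else 0 := by
      intro r; simp [shiftMat, hjj, Fin.ext_iff]
    calc (∑ r : Fin L, (shiftMat L ^ n) i r * shiftMat L r j)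
        = ∑ r : Fin L, (if r = jj then (shiftMat L ^ n) i r else 0) := by
          refine Finset.sum_congr rfl fun r _ => ?_
          rw [hsel r]; by_cases h : r = jj <;> simp [h]
      _ = (shiftMat L ^ n) i jj := by simp
      _ = if (i : ℕ) = ((j : ℕ) + (n + 1)) % L then 1 else 0 := by
          rw [ih jj]
          congr 1
          simp only [hjj]
          rw [Nat.mod_add_mod]
          ring_nf


lemma omg_ne (L : ℕ) : omg L ≠ 0 := by
  intro h; have := omg_abs L; rw [h] at this; simp at this


lemma orth (L : ℕ) (hL : 1 ≤ L) (a b : Fin L) :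
    ∑ t : Fin L, (starRingEnd ℂ) (omg L ^ ((t : ℕ) * (a : ℕ))) * omg L ^ ((t : ℕ) * (b : ℕ))
      = if a = b then (L : ℂ) else 0 := by
  set ζ := omg L with hζdef
  have hζ := omg_prim L hL
  set r : ℂ := (ζ⁻¹) ^ (a : ℕ) * ζ ^ (b : ℕ) with hr
  have hterm : ∀ t : Fin L,
      (starRingEnd ℂ) (ζ ^ ((t : ℕ) * (a : ℕ))) * ζ ^ ((t : ℕ) * (b : ℕ)) = r ^ (t : ℕ) := by
    intro t
    rw [map_pow, conj_omg, hr, mul_pow, ← pow_mul, ← pow_mul]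
    ring_nf
    rw [← hζdef]; ring
  simp only [hterm]
  rw [Fin.sum_univ_eq_sum_range (fun t => r ^ t) L]
  by_cases hab : a = b
  · subst hab
    have : r = 1 := by rw [hr, ← mul_pow, inv_mul_cancel₀ (omg_ne L), one_pow]
    simp [this]
  · rw [if_neg hab]
    have hr1 : r ≠ 1 := by
      intro h
      apply hab
      have : ζ ^ (b : ℕ) = ζ ^ (a : ℕ) := by
        have h2 := congrArg (· * ζ ^ (a : ℕ)) h
        simp only [hr, one_mul] at h2
        rw [mul_comm (ζ⁻¹ ^ (a:ℕ)), mul_assoc, ← mul_pow, inv_mul_cancel₀ (omg_ne L),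
          one_pow, mul_one] at h2
        exact h2
      exact Fin.ext (hζ.pow_inj b.isLt a.isLt this).symm
    rw [geom_sum_eq hr1]
    have hrL : r ^ L = 1 := by
      rw [hr, mul_pow, ← pow_mul, ← pow_mul, mul_comm (a:ℕ) L, mul_comm (b:ℕ) L,
        pow_mul, pow_mul, inv_pow, hζ.pow_eq_one]
      simp
    rw [hrL]; simp


lemma sqrt_mul_self_C (L : ℕ) : (Real.sqrt L : ℂ) * (Real.sqrt L : ℂ) = (L : ℂ) := by
  rw [← Complex.ofReal_mul, Real.mul_self_sqrt (Nat.cast_nonneg L)]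
  simp


lemma key (L : ℕ) (hL : 1 ≤ L) (i j : Fin L) (f : Fin L → ℂ) :
    (∑ k : Fin L, (shiftMat L ^ (k : ℕ)) i j * f k)
      = ∑ t : Fin L, (starRingEnd ℂ) (Fmat L t i) * Fmat L t j
          * ∑ k : Fin L, omg L ^ ((t : ℕ) * (k : ℕ)) * f k := by
  have hLC : (L : ℂ) ≠ 0 := by
    exact Nat.cast_ne_zero.mpr (by omega)
  rw [show (∑ t : Fin L, (starRingEnd ℂ) (Fmat L t i) * Fmat L t j
          * ∑ k : Fin L, omg L ^ ((t : ℕ) * (k : ℕ)) * f k)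
      = ∑ t : Fin L, ∑ k : Fin L, (starRingEnd ℂ) (Fmat L t i) * Fmat L t j
          * (omg L ^ ((t : ℕ) * (k : ℕ)) * f k)
      from Finset.sum_congr rfl fun t _ => Finset.mul_sum _ _ _]
  rw [Finset.sum_comm]
  refine Finset.sum_congr rfl fun k _ => ?_
  rw [shift_pow L hL]
  have hm : ((j : ℕ) + (k : ℕ)) % L < L := Nat.mod_lt _ (by omega)
  set m : Fin L := ⟨((j : ℕ) + (k : ℕ)) % L, hm⟩ with hmdef
  have hterm : ∀ t : Fin L,
      (starRingEnd ℂ) (Fmat L t i) * Fmat L t j * (omg L ^ ((t : ℕ) * (k : ℕ)) * f k)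
      = ((starRingEnd ℂ) (omg L ^ ((t : ℕ) * (i : ℕ))) * omg L ^ ((t : ℕ) * (m : ℕ)))
          * f k / (L : ℂ) := by
    intro t
    have hωm : omg L ^ ((t : ℕ) * (j : ℕ)) * omg L ^ ((t : ℕ) * (k : ℕ))
        = omg L ^ ((t : ℕ) * (m : ℕ)) := by
      rw [← pow_add, ← Nat.mul_add, omg_pow_mod L hL, hmdef]
      conv_rhs => rw [omg_pow_mod L hL]
      congr 1
      exact (Nat.mul_mod_mod _ _ _).symm
    simp only [Fmat, Matrix.of_apply]
    rw [map_div₀, Complex.conj_ofReal, div_mul_div_comm, sqrt_mul_self_C, ← hωm]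
    ring
  simp only [hterm]
  rw [← Finset.sum_div, ← Finset.sum_mul, orth L hL i m]
  by_cases h : i = m
  · rw [if_pos h, if_pos (by rw [h])]
    field_simp
  · rw [if_neg h, if_neg (fun hc => h (Fin.ext hc))]; simp


/-- The block diagonal matrix with `m₀ × m₀` diagonal blocks `X_j`, indexed by
an arbitrary (multi-)index type `ι`. -/
def bdiagOn {ι : Type} [DecidableEq ι] (m₀ : ℕ)
    (X : ι → Matrix (Fin m₀) (Fin m₀) ℂ) :
    Matrix (ι × Fin m₀) (ι × Fin m₀) ℂ :=
  Matrix.of fun p q => if p.1 = q.1 then X p.1 p.2 q.2 else 0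

lemma sandwich_entry {ι : Type} [Fintype ι] [DecidableEq ι] (m₀ : ℕ)
    (F : Matrix ι ι ℂ) (X : ι → Matrix (Fin m₀) (Fin m₀) ℂ)
    (p q : ι × Fin m₀) :
    (((Fᴴ ⊗ₖ (1 : Matrix (Fin m₀) (Fin m₀) ℂ)) * bdiagOn m₀ X
        * (F ⊗ₖ (1 : Matrix (Fin m₀) (Fin m₀) ℂ))) : Matrix (ι × Fin m₀) (ι × Fin m₀) ℂ) p q
      = ∑ t : ι, (starRingEnd ℂ) (F t p.1) * F t q.1 * X t p.2 q.2 := by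
  simp only [Matrix.mul_apply, Matrix.kroneckerMap_apply, bdiagOn, Matrix.of_apply,
    Matrix.conjTranspose_apply, Matrix.one_apply, Fintype.sum_prod_type,
    mul_ite, ite_mul, mul_zero, zero_mul, mul_one, one_mul,
    Finset.sum_ite_eq, Finset.sum_ite_eq', Finset.mem_univ, if_true]
  refine Finset.sum_congr rfl fun t _ => ?_
  rw [Finset.sum_eq_single t (fun u _ hu => by
      rw [Finset.sum_eq_zero]; intro c _; rw [if_neg hu]) (by simp)]
  rw [Finset.sum_eq_single p.2 (fun c _ hc => by rw [if_pos rfl, if_neg (Ne.symm hc)])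
      (by simp), if_pos rfl, if_pos rfl]
  simp [RCLike.star_def]
  ring

lemma prod3 {α β γ : Type} [Fintype α] [Fintype β] [Fintype γ]
    (f : α → ℂ) (g : β → ℂ) (h : γ → ℂ) :
    (∑ a : α, f a) * (∑ b : β, g b) * (∑ c : γ, h c)
      = ∑ a : α, ∑ b : β, ∑ c : γ, f a * g b * h c := by
  rw [Finset.sum_mul_sum, Finset.sum_mul]
  refine Finset.sum_congr rfl fun a _ => ?_
  rw [Finset.sum_mul]
  refine Finset.sum_congr rfl fun b _ => ?_
  rw [Finset.mul_sum]


/-- Block diagonalization of a three-level block circulant matrix with rank-1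
Hadamard-separable blocks `A_{k₁k₂k₃} = A^{(1)}_{k₁} ∘ A^{(2)}_{k₂} ∘ A^{(3)}_{k₃}`:
the diagonal block indexed by `(j₁,j₂,j₃)` factorizes as the Hadamard product
`Ā^{(1)}_{j₁} ∘ Ā^{(2)}_{j₂} ∘ Ā^{(3)}_{j₃}` of the 1D Fourier transforms
`Ā^{(ℓ)}_j = Σ_k ω_{L_ℓ}^{jk} A^{(ℓ)}_k`. -/
theorem separable_bcirc_block_diagonalization (L₁ L₂ L₃ m₀ : ℕ)
    (h₁ : 1 ≤ L₁) (h₂ : 1 ≤ L₂) (h₃ : 1 ≤ L₃)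
    (A₁ : Fin L₁ → Matrix (Fin m₀) (Fin m₀) ℂ)
    (A₂ : Fin L₂ → Matrix (Fin m₀) (Fin m₀) ℂ)
    (A₃ : Fin L₃ → Matrix (Fin m₀) (Fin m₀) ℂ) :
    (∑ k₁ : Fin L₁, ∑ k₂ : Fin L₂, ∑ k₃ : Fin L₃,
        (shiftMat L₁ ^ (k₁ : ℕ)) ⊗ₖ (shiftMat L₂ ^ (k₂ : ℕ)) ⊗ₖ (shiftMat L₃ ^ (k₃ : ℕ))
          ⊗ₖ (A₁ k₁ ⊙ A₂ k₂ ⊙ A₃ k₃)) =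
      ((Fmat L₁ ⊗ₖ Fmat L₂ ⊗ₖ Fmat L₃)ᴴ ⊗ₖ (1 : Matrix (Fin m₀) (Fin m₀) ℂ)) *
        bdiagOn m₀ (fun j : (Fin L₁ × Fin L₂) × Fin L₃ =>
          (∑ k : Fin L₁, omg L₁ ^ ((j.1.1 : ℕ) * (k : ℕ)) • A₁ k) ⊙
          (∑ k : Fin L₂, omg L₂ ^ ((j.1.2 : ℕ) * (k : ℕ)) • A₂ k) ⊙
          (∑ k : Fin L₃, omg L₃ ^ ((j.2 : ℕ) * (k : ℕ)) • A₃ k)) *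
        ((Fmat L₁ ⊗ₖ Fmat L₂ ⊗ₖ Fmat L₃) ⊗ₖ (1 : Matrix (Fin m₀) (Fin m₀) ℂ)) := by
  apply Matrix.ext
  rintro ⟨⟨⟨i₁, i₂⟩, i₃⟩, a⟩ ⟨⟨⟨j₁, j₂⟩, j₃⟩, b⟩
  rw [sandwich_entry]
  simp only [Matrix.sum_apply, Matrix.kroneckerMap_apply, Matrix.hadamard_apply,
    Matrix.smul_apply, smul_eq_mul, Fintype.sum_prod_type]
  trans ((∑ k₁ : Fin L₁, (shiftMat L₁ ^ (k₁ : ℕ)) i₁ j₁ * A₁ k₁ a b) *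
         (∑ k₂ : Fin L₂, (shiftMat L₂ ^ (k₂ : ℕ)) i₂ j₂ * A₂ k₂ a b) *
         (∑ k₃ : Fin L₃, (shiftMat L₃ ^ (k₃ : ℕ)) i₃ j₃ * A₃ k₃ a b))
  · rw [prod3]
    refine Finset.sum_congr rfl fun k₁ _ => Finset.sum_congr rfl fun k₂ _ =>
      Finset.sum_congr rfl fun k₃ _ => ?_
    ring
  rw [key L₁ h₁ i₁ j₁, key L₂ h₂ i₂ j₂, key L₃ h₃ i₃ j₃, prod3]
  refine Finset.sum_congr rfl fun t₁ _ => Finset.sum_congr rfl fun t₂ _ =>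
    Finset.sum_congr rfl fun t₃ _ => ?_
  simp only [_root_.map_mul]
  ring
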